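/- Let A₊, A₋ be real n×n matrices and M ≥ 1, ν > 0 with ‖exp(tA₋)‖ ≤ M e^{−νt} and ‖exp(−tA₊)‖ ≤ M e^{−νt} for all t ≥ 0. Let T > 0 satisfy M e^{−νT} ≤ 1 and M² e^{−2νT} ≤ 1/2. Then for all a, b ∈ ℝⁿ there exists a unique pair (w₀, v_T) ∈ ℝⁿ × ℝⁿ such that the functions w(t) = exp(tA₋) w₀ and v(t) = exp(−(T − t)A₊) v_T satisfy v(0) + w(0) = a and v(T) + w(T) = b; moreover ‖w₀ − (a − exp(−TA₊) b)‖ ≤ 2M² e^{−2νT} (‖a‖ + ‖b‖) and ‖v_T − (b − exp(TA₋) a)‖ ≤ 2M² e^{−2νT} (‖a‖ + ‖b‖). -/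

import Mathlib

open Matrix

/-- The Euclidean norm of a vector of `ℝⁿ`. -/
noncomputable def enorm13 {n : ℕ} (x : Fin n → ℝ) : ℝ := Real.sqrt (x ⬝ᵥ x)

lemma enorm13_eq {n : ℕ} (x : Fin n → ℝ) :
    enorm13 x = ‖(WithLp.equiv 2 (Fin n → ℝ)).symm x‖ := by
  rw [EuclideanSpace.norm_eq]
  unfold enorm13 dotProduct
  congr 1
  apply Finset.sum_congr rfl
  intro i _
  simp [Real.norm_eq_abs, sq_abs, sq]

lemma enorm13_nonneg {n : ℕ} (x : Fin n → ℝ) : 0 ≤ enorm13 x := Real.sqrt_nonneg _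

lemma enorm13_add_le {n : ℕ} (x y : Fin n → ℝ) :
    enorm13 (x + y) ≤ enorm13 x + enorm13 y := by
  simp only [enorm13_eq]
  exact norm_add_le _ _

lemma enorm13_sub_le {n : ℕ} (x y : Fin n → ℝ) :
    enorm13 (x - y) ≤ enorm13 x + enorm13 y := by
  simp only [enorm13_eq]
  exact norm_sub_le _ _

lemma enorm13_eq_zero {n : ℕ} (x : Fin n → ℝ) (h : enorm13 x = 0) : x = 0 := by
  have := enorm13_eq x
  rw [h] at this
  have : (WithLp.equiv 2 (Fin n → ℝ)).symm x = 0 := by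
    exact (norm_eq_zero.mp this.symm)
  simpa using congrArg (WithLp.equiv 2 (Fin n → ℝ)) this


/-- unique solvability of the boundary conditions
`v(0) + w(0) = a`, `v(T) + w(T) = b` for `w(t) = exp(tA₋) w₀`, `v(t) = exp(−(T−t)A₊) v_T`,
with quantitative estimates on `(w₀, v_T)`. Matrix operator-norm bounds are expressed
through the action on vectors with the Euclidean norm. -/
theorem boundary_pair_unique
    (n : ℕ)
    (Aplus Aminus : Matrix (Fin n) (Fin n) ℝ)
    (M ν : ℝ) (hM : 1 ≤ M) (hν : 0 < ν)
    (hminus : ∀ t : ℝ, 0 ≤ t → ∀ x : Fin n → ℝ,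
      enorm13 ((NormedSpace.exp (t • Aminus)).mulVec x)
        ≤ M * Real.exp (-ν * t) * enorm13 x)
    (hplus : ∀ t : ℝ, 0 ≤ t → ∀ x : Fin n → ℝ,
      enorm13 ((NormedSpace.exp ((-t) • Aplus)).mulVec x)
        ≤ M * Real.exp (-ν * t) * enorm13 x)
    (T : ℝ) (hT : 0 < T)
    (hT1 : M * Real.exp (-ν * T) ≤ 1)
    (hT2 : M ^ 2 * Real.exp (-2 * ν * T) ≤ 1 / 2)
    (a b : Fin n → ℝ) :
    ∃ w₀ vT : Fin n → ℝ,
      ((NormedSpace.exp ((-T) • Aplus)).mulVec vT + w₀ = a ∧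
        vT + (NormedSpace.exp (T • Aminus)).mulVec w₀ = b) ∧
      (∀ w₀' vT' : Fin n → ℝ,
        (NormedSpace.exp ((-T) • Aplus)).mulVec vT' + w₀' = a →
        vT' + (NormedSpace.exp (T • Aminus)).mulVec w₀' = b →
        w₀' = w₀ ∧ vT' = vT) ∧
      enorm13 (w₀ - (a - (NormedSpace.exp ((-T) • Aplus)).mulVec b))
        ≤ 2 * M ^ 2 * Real.exp (-2 * ν * T) * (enorm13 a + enorm13 b) ∧
      enorm13 (vT - (b - (NormedSpace.exp (T • Aminus)).mulVec a))
        ≤ 2 * M ^ 2 * Real.exp (-2 * ν * T) * (enorm13 a + enorm13 b) := by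
  set P : Matrix (Fin n) (Fin n) ℝ := NormedSpace.exp ((-T) • Aplus) with hPdef
  set Q : Matrix (Fin n) (Fin n) ℝ := NormedSpace.exp (T • Aminus) with hQdef
  have hr0 : (0:ℝ) ≤ M * Real.exp (-ν * T) := by positivity
  set r : ℝ := M * Real.exp (-ν * T) with hrdef
  have hP : ∀ x, enorm13 (P.mulVec x) ≤ r * enorm13 x := hplus T hT.le
  have hQ : ∀ x, enorm13 (Q.mulVec x) ≤ r * enorm13 x := hminus T hT.le
  have hexp2 : Real.exp (-ν * T) ^ 2 = Real.exp (-2 * ν * T) := by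
    rw [sq, ← Real.exp_add]
    congr 1
    ring
  have hr2 : r ^ 2 = M ^ 2 * Real.exp (-2 * ν * T) := by
    rw [hrdef, mul_pow, hexp2]
  have hs2 : r ^ 2 ≤ 1 / 2 := hr2 ▸ hT2
  have hQP : ∀ x, enorm13 ((Q * P).mulVec x) ≤ r ^ 2 * enorm13 x := by
    intro x
    rw [← Matrix.mulVec_mulVec]
    calc enorm13 (Q.mulVec (P.mulVec x)) ≤ r * enorm13 (P.mulVec x) := hQ _
      _ ≤ r * (r * enorm13 x) := mul_le_mul_of_nonneg_left (hP x) hr0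
      _ = r ^ 2 * enorm13 x := by ring
  have hPQ : ∀ x, enorm13 ((P * Q).mulVec x) ≤ r ^ 2 * enorm13 x := by
    intro x
    rw [← Matrix.mulVec_mulVec]
    calc enorm13 (P.mulVec (Q.mulVec x)) ≤ r * enorm13 (Q.mulVec x) := hP _
      _ ≤ r * (r * enorm13 x) := mul_le_mul_of_nonneg_left (hQ x) hr0
      _ = r ^ 2 * enorm13 x := by ring
  have hker : ∀ x : Fin n → ℝ, x = (Q * P).mulVec x → x = 0 := by
    intro x hx
    have h1 : enorm13 x ≤ r ^ 2 * enorm13 x := by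
      conv_lhs => rw [hx]
      exact hQP x
    have h2 : enorm13 x ≤ 1 / 2 * enorm13 x :=
      h1.trans (mul_le_mul_of_nonneg_right hs2 (enorm13_nonneg x))
    exact enorm13_eq_zero x (le_antisymm (by linarith) (enorm13_nonneg x))
  have hinj : Function.Injective (Matrix.mulVecLin (1 - Q * P)) := by
    rw [← LinearMap.ker_eq_bot, LinearMap.ker_eq_bot']
    intro x hx
    apply hker
    have h0 : (1 - Q * P).mulVec x = 0 := hx
    rw [Matrix.sub_mulVec, Matrix.one_mulVec, sub_eq_zero] at h0
    exact h0
  have hsurj : Function.Surjective (Matrix.mulVecLin (1 - Q * P)) :=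
    LinearMap.injective_iff_surjective.mp hinj
  obtain ⟨vT, hvT⟩ := hsurj (b - Q.mulVec a)
  have hvT' : vT - (Q * P).mulVec vT = b - Q.mulVec a := by
    have h0 : (1 - Q * P).mulVec vT = b - Q.mulVec a := hvT
    rwa [Matrix.sub_mulVec, Matrix.one_mulVec] at h0
  set w₀ : Fin n → ℝ := a - P.mulVec vT with hw₀def
  have heq1 : P.mulVec vT + w₀ = a := by rw [hw₀def]; abel
  have heq2 : vT + Q.mulVec w₀ = b := by
    have hvT'' : vT - Q.mulVec (P.mulVec vT) = b - Q.mulVec a := by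
      rwa [← Matrix.mulVec_mulVec] at hvT'
    rw [hw₀def, Matrix.mulVec_sub]
    linear_combination hvT''
  refine ⟨w₀, vT, ⟨heq1, heq2⟩, ?_, ?_, ?_⟩
  · -- uniqueness
    intro w₀' vT' h1 h2
    have e2 : w₀' - w₀ = P.mulVec vT - P.mulVec vT' := by linear_combination h1 - heq1
    have e3 : Q.mulVec w₀' - Q.mulVec w₀
        = Q.mulVec (P.mulVec vT) - Q.mulVec (P.mulVec vT') := by
      rw [← Matrix.mulVec_sub, e2, Matrix.mulVec_sub]
    have hd : vT' - vT = (Q * P).mulVec (vT' - vT) := by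
      rw [← Matrix.mulVec_mulVec, Matrix.mulVec_sub, Matrix.mulVec_sub]
      linear_combination h2 - heq2 - e3
    have hz : vT' - vT = 0 := hker _ hd
    have hvTeq : vT' = vT := sub_eq_zero.mp hz
    refine ⟨?_, hvTeq⟩
    rw [hvTeq] at h1
    linear_combination h1 - heq1
  · -- estimate for w₀
    have hw₀eq : w₀ - (a - P.mulVec b) = (P * Q).mulVec w₀ := by
      have h2' : Q.mulVec w₀ = b - vT := by linear_combination heq2
      rw [← Matrix.mulVec_mulVec, h2', Matrix.mulVec_sub, hw₀def]
      abel
    have hbw : enorm13 w₀ ≤ 2 * (enorm13 a + enorm13 b) := by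
      have h1 : enorm13 w₀ ≤ enorm13 (a - P.mulVec b) + enorm13 ((P * Q).mulVec w₀) := by
        have hsplit : w₀ = (a - P.mulVec b) + (P * Q).mulVec w₀ := by
          linear_combination hw₀eq
        conv_lhs => rw [hsplit]
        exact enorm13_add_le _ _
      have h2 : enorm13 (a - P.mulVec b) ≤ enorm13 a + enorm13 b := by
        refine (enorm13_sub_le _ _).trans ?_
        have := (hP b).trans (mul_le_mul_of_nonneg_right hT1 (enorm13_nonneg b))
        linarith
      have h3 := (hPQ w₀).trans (mul_le_mul_of_nonneg_right hs2 (enorm13_nonneg w₀))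
      linarith
    calc enorm13 (w₀ - (a - P.mulVec b)) = enorm13 ((P * Q).mulVec w₀) := by rw [hw₀eq]
      _ ≤ r ^ 2 * enorm13 w₀ := hPQ w₀
      _ ≤ r ^ 2 * (2 * (enorm13 a + enorm13 b)) :=
          mul_le_mul_of_nonneg_left hbw (by positivity)
      _ = 2 * M ^ 2 * Real.exp (-2 * ν * T) * (enorm13 a + enorm13 b) := by
          rw [hr2]; ring
  · -- estimate for vT
    have hveq : vT - (b - Q.mulVec a) = (Q * P).mulVec vT := by
      linear_combination hvT'
    have hbv : enorm13 vT ≤ 2 * (enorm13 a + enorm13 b) := by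
      have h1 : enorm13 vT ≤ enorm13 (b - Q.mulVec a) + enorm13 ((Q * P).mulVec vT) := by
        have hsplit : vT = (b - Q.mulVec a) + (Q * P).mulVec vT := by
          linear_combination hveq
        conv_lhs => rw [hsplit]
        exact enorm13_add_le _ _
      have h2 : enorm13 (b - Q.mulVec a) ≤ enorm13 a + enorm13 b := by
        refine (enorm13_sub_le _ _).trans ?_
        have := (hQ a).trans (mul_le_mul_of_nonneg_right hT1 (enorm13_nonneg a))
        linarith
      have h3 := (hQP vT).trans (mul_le_mul_of_nonneg_right hs2 (enorm13_nonneg vT))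
      linarith
    calc enorm13 (vT - (b - Q.mulVec a)) = enorm13 ((Q * P).mulVec vT) := by rw [hveq]
      _ ≤ r ^ 2 * enorm13 vT := hQP vT
      _ ≤ r ^ 2 * (2 * (enorm13 a + enorm13 b)) :=
          mul_le_mul_of_nonneg_left hbv (by positivity)
      _ = 2 * M ^ 2 * Real.exp (-2 * ν * T) * (enorm13 a + enorm13 b) := by
          rw [hr2]; ring
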